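/- The fundamental group of a closed non-orientable surface is not a Kähler group. -/

import Mathlib

/-- The module of real 1-cocycles (= homomorphisms `G → ℝ`), so that
`H¹(G;ℝ) = Z1 G` for trivial coefficients. -/
def Z1 (G : Type*) [Group G] : Submodule ℝ (G → ℝ) where
  carrier := {f | ∀ g h : G, f (g * h) = f g + f h}
  add_mem' := by intro a b ha hb g h; simp only [Pi.add_apply, ha g h, hb g h]; ring
  zero_mem' := by intro g h; simp
  smul_mem' := by intro c a ha g h; simp only [Pi.smul_apply, ha g h, smul_eq_mul]; ring

/-- First Betti number `b₁(G) = dim_ℝ H¹(G;ℝ) = dim_ℝ Hom(G,ℝ)`. -/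
noncomputable def b1 (G : Type*) [Group G] : ℕ := Module.finrank ℝ (Z1 G)

/-- Real 2-cocycles on `G` (trivial coefficients, inhomogeneous bar cochains). -/
def Z2 (G : Type*) [Group G] : Submodule ℝ (G × G → ℝ) where
  carrier := {f | ∀ g h k : G, f (g, h) + f (g * h, k) = f (g, h * k) + f (h, k)}
  add_mem' := by intro a b ha hb g h k; simp only [Pi.add_apply]
                 have := ha g h k; have := hb g h k; linarith
  zero_mem' := by intro g h k; simp
  smul_mem' := by intro c a ha g h k; simp only [Pi.smul_apply, smul_eq_mul]
                  linear_combination c * (ha g h k)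

/-- Coboundary map from 1-cochains to 2-cochains. -/
noncomputable def cobound (G : Type*) [Group G] : (G → ℝ) →ₗ[ℝ] (G × G → ℝ) where
  toFun u := fun p => u p.1 + u p.2 - u (p.1 * p.2)
  map_add' u v := by funext p; simp [Pi.add_apply]; ring
  map_smul' c u := by funext p; simp [Pi.smul_apply, smul_eq_mul]; ring

/-- 2-coboundaries, viewed inside the 2-cocycles. -/
noncomputable def B2 (G : Type*) [Group G] : Submodule ℝ (Z2 G) :=
  (LinearMap.range (cobound G)).comap (Z2 G).subtype

/-- Second group cohomology `H²(G;ℝ)` with trivial real coefficients. -/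
noncomputable abbrev H2 (G : Type*) [Group G] := Z2 G ⧸ B2 G

/-- The cup product of two 1-cocycles, as a 2-cocycle. -/
noncomputable def cupAux {G : Type*} [Group G] (φ ψ : Z1 G) : Z2 G :=
  ⟨fun p => φ.1 p.1 * ψ.1 p.2, by
    intro g h k
    have hφ := φ.2
    have hψ := ψ.2
    change ∀ g h : G, φ.1 (g * h) = φ.1 g + φ.1 h at hφ
    change ∀ g h : G, ψ.1 (g * h) = ψ.1 g + ψ.1 h at hψ
    simp only []
    rw [hφ g h, hψ h k]
    ring⟩

/-- The cup product `H¹(G;ℝ) × H¹(G;ℝ) → H²(G;ℝ)` on group cohomology. -/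
noncomputable def cup {G : Type*} [Group G] (φ ψ : Z1 G) : H2 G :=
  Submodule.Quotient.mk (cupAux φ ψ)

open scoped commutatorElement

/-- The relator `[a₁,b₁]⋯[a_g,b_g]` of a closed orientable genus-`g` surface group. -/
def surfaceRel (g : ℕ) : FreeGroup (Fin (2 * g)) :=
  (List.ofFn (fun i : Fin g =>
    ⁅FreeGroup.of (⟨2 * i.1, by omega⟩ : Fin (2 * g)),
     FreeGroup.of (⟨2 * i.1 + 1, by omega⟩ : Fin (2 * g))⁆)).prod

/-- The fundamental group `⟨a₁,b₁,…,a_g,b_g ∣ [a₁,b₁]⋯[a_g,b_g]⟩` of the closed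
orientable surface of genus `g`. -/
abbrev SurfaceGroup (g : ℕ) : Type := PresentedGroup ({surfaceRel g} : Set (FreeGroup (Fin (2 * g))))

/-- The relator `a₁²a₂²⋯a_g²` of a closed non-orientable genus-`g` surface group. -/
def nonorientableRel (g : ℕ) : FreeGroup (Fin g) :=
  (List.ofFn (fun i : Fin g => (FreeGroup.of i) ^ 2)).prod

/-- The fundamental group `⟨a₁,…,a_g ∣ a₁²⋯a_g²⟩` of the closed non-orientable
surface of genus `g`. -/
abbrev NonorientableSurfaceGroup (g : ℕ) : Type :=
  PresentedGroup ({nonorientableRel g} : Set (FreeGroup (Fin g)))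

/-- Relators of the orbifold fundamental group of a closed orientable genus-`g`
2-orbifold with `k` cone points of orders `m 0, …, m (k-1)`. -/
def orbifoldRels (g k : ℕ) (m : Fin k → ℕ) : Set (FreeGroup (Fin (2 * g) ⊕ Fin k)) :=
  {r | ∃ j : Fin k, r = (FreeGroup.of (Sum.inr j)) ^ (m j)} ∪
  { (List.ofFn (fun i : Fin g =>
      ⁅(FreeGroup.of (Sum.inl (⟨2 * i.1, by omega⟩ : Fin (2 * g))) : FreeGroup (Fin (2 * g) ⊕ Fin k)),
       FreeGroup.of (Sum.inl (⟨2 * i.1 + 1, by omega⟩ : Fin (2 * g)))⁆)).prod *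
    (List.ofFn (fun j : Fin k => FreeGroup.of (Sum.inr j))).prod }

/-- The orbifold fundamental group of a closed orientable genus-`g` 2-orbifold
with cone points of orders `m j`. -/
abbrev OrbifoldGroup (g k : ℕ) (m : Fin k → ℕ) : Type :=
  PresentedGroup (orbifoldRels g k m)

/-- Pullback of 1-cocycles along a group homomorphism. -/
def z1Map {G Q : Type*} [Group G] [Group Q] (f : G →* Q) : Z1 Q →ₗ[ℝ] Z1 G where
  toFun φ := ⟨fun x => φ.1 (f x), by intro x y; simp only [map_mul]; exact φ.2 (f x) (f y)⟩
  map_add' φ ψ := rfl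
  map_smul' c φ := rfl



namespace NSGaux

/-- The real Heisenberg group. -/
@[ext] structure Heis where
  a : ℝ
  b : ℝ
  c : ℝ

instance : Mul Heis := ⟨fun x y => ⟨x.a + y.a, x.b + y.b, x.c + y.c + x.a * y.b⟩⟩
instance : One Heis := ⟨⟨0, 0, 0⟩⟩
instance : Inv Heis := ⟨fun x => ⟨-x.a, -x.b, -x.c + x.a * x.b⟩⟩

@[simp] lemma mul_a (x y : Heis) : (x * y).a = x.a + y.a := rfl
@[simp] lemma mul_b (x y : Heis) : (x * y).b = x.b + y.b := rfl
@[simp] lemma mul_c (x y : Heis) : (x * y).c = x.c + y.c + x.a * y.b := rfl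
@[simp] lemma one_a : (1 : Heis).a = 0 := rfl
@[simp] lemma one_b : (1 : Heis).b = 0 := rfl
@[simp] lemma one_c : (1 : Heis).c = 0 := rfl
@[simp] lemma inv_a (x : Heis) : x⁻¹.a = -x.a := rfl
@[simp] lemma inv_b (x : Heis) : x⁻¹.b = -x.b := rfl
@[simp] lemma inv_c (x : Heis) : x⁻¹.c = -x.c + x.a * x.b := rfl

instance : Group Heis where
  mul_assoc x y z := by ext <;> simp <;> ring
  one_mul x := by ext <;> simp
  mul_one x := by ext <;> simp
  inv_mul_cancel x := by ext <;> simp <;> ring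

lemma ofFn_prod : ∀ (n : ℕ) (x : Fin n → Heis),
    (List.ofFn x).prod =
      ⟨∑ i, (x i).a, ∑ i, (x i).b,
       (∑ i, (x i).c) + ∑ i, (x i).a * ∑ j ∈ Finset.Ioi i, (x j).b⟩
  | 0, x => by
      rw [List.ofFn_zero, List.prod_nil]
      ext <;> simp
  | n + 1, x => by
      rw [List.ofFn_succ, List.prod_cons, ofFn_prod n (fun i => x i.succ)]
      ext <;>
        simp [Fin.sum_univ_succ, Fin.sum_Ioi_zero, Fin.sum_Ioi_succ] <;> ring

section Z1Lemmas

variable {G : Type*} [Group G]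

lemma z1_one (φ : Z1 G) : φ.1 1 = 0 := by
  have h := φ.2 1 1
  rw [one_mul] at h
  linarith

lemma z1_sq (φ : Z1 G) (x : G) : φ.1 (x ^ 2) = 2 * φ.1 x := by
  rw [pow_two, φ.2]; ring

lemma z1_listProd (φ : Z1 G) : ∀ L : List G, φ.1 L.prod = (L.map φ.1).sum
  | [] => by simpa using z1_one φ
  | x :: t => by
      rw [List.prod_cons, φ.2, z1_listProd φ t, List.map_cons, List.sum_cons]

/-- A 1-cocycle as a monoid hom into `Multiplicative ℝ`. -/
def z1ToHom (φ : Z1 G) : G →* Multiplicative ℝ where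
  toFun x := Multiplicative.ofAdd (φ.1 x)
  map_one' := by
    show Multiplicative.ofAdd (φ.1 1) = 1
    rw [z1_one]; rfl
  map_mul' x y := by
    show Multiplicative.ofAdd (φ.1 (x * y))
      = Multiplicative.ofAdd (φ.1 x) * Multiplicative.ofAdd (φ.1 y)
    rw [φ.2 x y]; rfl

/-- A monoid hom into `Multiplicative ℝ` as a 1-cocycle. -/
def homToZ1 (f : G →* Multiplicative ℝ) : Z1 G :=
  ⟨fun x => Multiplicative.toAdd (f x), fun x y => by
    show Multiplicative.toAdd (f (x * y)) = _
    rw [map_mul]; rfl⟩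

end Z1Lemmas

/-- First Heisenberg projection as a hom. -/
def pa : Heis →* Multiplicative ℝ where
  toFun x := Multiplicative.ofAdd x.a
  map_one' := rfl
  map_mul' x y := rfl

/-- Second Heisenberg projection as a hom. -/
def pb : Heis →* Multiplicative ℝ where
  toFun x := Multiplicative.ofAdd x.b
  map_one' := rfl
  map_mul' x y := rfl

section Surface

variable (g : ℕ)

lemma relator_eq_one :
    (List.ofFn (fun i : Fin g =>
      (PresentedGroup.of (rels := {nonorientableRel g}) i) ^ 2)).prod = 1 := by
  have h1 : (PresentedGroup.mk ({nonorientableRel g} : Set (FreeGroup (Fin g)))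
      (nonorientableRel g)) = 1 := by
    apply (QuotientGroup.eq_one_iff _).2
    exact Subgroup.subset_normalClosure (by simp)
  rw [nonorientableRel, map_list_prod, List.map_ofFn] at h1
  have h1' := h1
  simp [Function.comp_def, map_pow] at h1'
  exact h1'

lemma sum_eval (φ : Z1 (NonorientableSurfaceGroup g)) :
    ∑ i : Fin g, φ.1 (PresentedGroup.of i) = 0 := by
  have h := congrArg φ.1 (relator_eq_one g)
  rw [z1_listProd, z1_one, List.map_ofFn, List.sum_ofFn] at h
  simp only [Function.comp_def, z1_sq] at h
  rw [← Finset.mul_sum] at h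
  linarith

/-- Given `c : Fin g → ℝ` with zero sum, get a hom from the surface group. -/
lemma exists_hom (c : Fin g → ℝ) (hc : ∑ i, c i = 0) :
    ∃ θ : NonorientableSurfaceGroup g →* Multiplicative ℝ,
      ∀ i, θ (PresentedGroup.of i) = Multiplicative.ofAdd (c i) := by
  have h : ∀ r ∈ ({nonorientableRel g} : Set (FreeGroup (Fin g))),
      FreeGroup.lift (fun i => Multiplicative.ofAdd (c i)) r = 1 := by
    intro r hr
    rw [Set.mem_singleton_iff] at hr
    subst hr
    rw [nonorientableRel, map_list_prod, List.map_ofFn]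
    simp only [Function.comp_def, map_pow, FreeGroup.lift_apply_of]
    rw [List.prod_ofFn]
    have : ∀ i : Fin g, (Multiplicative.ofAdd (c i)) ^ 2
        = Multiplicative.ofAdd (2 * c i) := by
      intro i
      rw [pow_two, ← ofAdd_add]
      ring_nf
    rw [Finset.prod_congr rfl (fun i _ => this i), ← ofAdd_sum, ← Finset.mul_sum, hc,
      mul_zero]
    rfl
  exact ⟨PresentedGroup.toGroup h, fun i => PresentedGroup.toGroup.of h⟩

/-- The key vanishing: every cup product of 1-cocycles on the nonorientable
surface group vanishes, because the classes lift to the Heisenberg group. -/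
lemma exists_primitive (φ ψ : Z1 (NonorientableSurfaceGroup g)) :
    ∃ U : NonorientableSurfaceGroup g → ℝ,
      ∀ x y, U (x * y) = U x + U y + φ.1 x * ψ.1 y := by
  set G := NonorientableSurfaceGroup g
  set a : Fin g → ℝ := fun i => φ.1 (PresentedGroup.of i) with ha
  set b : Fin g → ℝ := fun i => ψ.1 (PresentedGroup.of i) with hb
  set u : Fin g → ℝ := fun i =>
    -(a i * b i) / 2 - 2 * a i * ∑ j ∈ Finset.Ioi i, b j with hu
  set f : Fin g → Heis := fun i => ⟨a i, b i, u i⟩ with hf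
  have hsa : ∑ i, a i = 0 := sum_eval g φ
  have hsb : ∑ i, b i = 0 := sum_eval g ψ
  have hrel : ∀ r ∈ ({nonorientableRel g} : Set (FreeGroup (Fin g))),
      FreeGroup.lift f r = 1 := by
    intro r hr
    rw [Set.mem_singleton_iff] at hr
    subst hr
    rw [nonorientableRel, map_list_prod, List.map_ofFn]
    simp only [Function.comp_def, map_pow, FreeGroup.lift_apply_of]
    rw [ofFn_prod]
    ext
    · simp [hf, pow_two, ← Finset.sum_add_distrib, ← two_mul, ← Finset.mul_sum, hsa]
    · simp [hf, pow_two, ← Finset.sum_add_distrib, ← two_mul, ← Finset.mul_sum, hsb]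
    · simp only [hf, pow_two, mul_a, mul_b, mul_c, one_c]
      rw [← Finset.sum_add_distrib]
      apply Finset.sum_eq_zero
      intro i _
      have h2 : ∑ j ∈ Finset.Ioi i, (b j + b j) = 2 * ∑ j ∈ Finset.Ioi i, b j := by
        rw [Finset.mul_sum]
        exact Finset.sum_congr rfl fun j _ => (two_mul _).symm
      rw [h2, hu]
      ring
  set F : G →* Heis := PresentedGroup.toGroup hrel with hF
  have hFof : ∀ i, F (PresentedGroup.of i) = f i := fun i => PresentedGroup.toGroup.of hrel
  have hA : ∀ x : G, (F x).a = φ.1 x := by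
    have : pa.comp F = z1ToHom φ := by
      apply PresentedGroup.ext
      intro i
      show pa (F (PresentedGroup.of i)) = Multiplicative.ofAdd (φ.1 (PresentedGroup.of i))
      rw [hFof]
      rfl
    intro x
    have := DFunLike.congr_fun this x
    exact this
  have hB : ∀ x : G, (F x).b = ψ.1 x := by
    have : pb.comp F = z1ToHom ψ := by
      apply PresentedGroup.ext
      intro i
      show pb (F (PresentedGroup.of i)) = Multiplicative.ofAdd (ψ.1 (PresentedGroup.of i))
      rw [hFof]
      rfl
    intro x
    have := DFunLike.congr_fun this x
    exact this
  refine ⟨fun x => (F x).c, fun x y => ?_⟩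
  show (F (x * y)).c = (F x).c + (F y).c + φ.1 x * ψ.1 y
  rw [← hA x, ← hB y, map_mul, mul_c]

lemma cup_eq_zero (φ ψ : Z1 (NonorientableSurfaceGroup g)) : cup φ ψ = 0 := by
  obtain ⟨U, hU⟩ := exists_primitive g φ ψ
  rw [cup, Submodule.Quotient.mk_eq_zero, B2, Submodule.mem_comap]
  refine ⟨-U, ?_⟩
  funext p
  show (-U) p.1 + (-U) p.2 - (-U) (p.1 * p.2) = φ.1 p.1 * ψ.1 p.2
  simp only [Pi.neg_apply]
  rw [hU p.1 p.2]
  ring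

/-- Evaluation of 1-cocycles at the generators. -/
def evalMap : Z1 (NonorientableSurfaceGroup g) →ₗ[ℝ] (Fin g → ℝ) where
  toFun φ := fun i => φ.1 (PresentedGroup.of i)
  map_add' _ _ := rfl
  map_smul' _ _ := rfl

lemma evalMap_inj : Function.Injective (evalMap g) := by
  rw [← LinearMap.ker_eq_bot, LinearMap.ker_eq_bot']
  intro φ hφ
  have h : z1ToHom φ = z1ToHom (0 : Z1 (NonorientableSurfaceGroup g)) := by
    apply PresentedGroup.ext
    intro i
    have : φ.1 (PresentedGroup.of i) = 0 := congrFun hφ i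
    show Multiplicative.ofAdd (φ.1 (PresentedGroup.of i)) = _
    rw [this]
    rfl
  ext x
  have := DFunLike.congr_fun h x
  simpa [z1ToHom] using this

instance : FiniteDimensional ℝ (Z1 (NonorientableSurfaceGroup g)) :=
  FiniteDimensional.of_injective (evalMap g) (evalMap_inj g)

lemma b1_pos (hg : 2 ≤ g) : 0 < b1 (NonorientableSurfaceGroup g) := by
  rw [b1, Module.finrank_pos_iff]
  set i0 : Fin g := ⟨0, by omega⟩
  set i1 : Fin g := ⟨1, by omega⟩
  have hne : i0 ≠ i1 := by simp [i0, i1, Fin.ext_iff]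
  set c : Fin g → ℝ := fun i => (if i = i0 then 1 else 0) - (if i = i1 then 1 else 0)
    with hc
  have hsum : ∑ i, c i = 0 := by
    rw [hc]
    rw [Finset.sum_sub_distrib]
    simp
  obtain ⟨θ, hθ⟩ := exists_hom g c hsum
  refine ⟨homToZ1 θ, 0, fun h => ?_⟩
  have h0 : (homToZ1 θ).1 (PresentedGroup.of i0) = 1 := by
    show Multiplicative.toAdd (θ (PresentedGroup.of i0)) = 1
    rw [hθ]
    simp [hc, hne]
  rw [h] at h0
  simpa using h0

end Surface

end NSGaux

/-- The fundamental group of a closed non-orientable surface (of genus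
`g ≥ 2`, the genus-1 case ℝP² having finite fundamental group) is not a Kähler group.
The Kähler input: Kähler groups have even `b₁` and, when `b₁ > 0`, non-trivial cup
product `H¹ × H¹ → H²` (Hard Lefschetz). -/
theorem nonorientable_surface_group_not_kahler
    (IsKahler : (G : Type) → [inst : Group G] → Prop)
    (hEven : ∀ (G : Type) [Group G], IsKahler G → Even (b1 G))
    (hCup : ∀ (G : Type) [Group G], IsKahler G → 0 < b1 G →
      ∃ φ ψ : Z1 G, cup φ ψ ≠ 0)
    (g : ℕ) (hg : 2 ≤ g) :
    ¬ IsKahler (NonorientableSurfaceGroup g) := by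
  intro hK
  obtain ⟨φ, ψ, hne⟩ := hCup _ hK (NSGaux.b1_pos g hg)
  exact hne (NSGaux.cup_eq_zero g φ ψ)
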